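/- Let a : ℕ → ℝ be a sequence such that the power series Σ_{x=0}^∞ a_x c^x has radius of convergence R > 0, and for each n ∈ ℕ define μ_n(c) = Σ_{x=0}^∞ x^n a_x c^x. Then for all real numbers c and w with |c|·e^{|w|} < R, the series Σ_{n=0}^∞ μ_n(c)·w^n/n! converges and equals μ₀(c·e^w). -/

import Mathlib

open scoped ENNReal NNReal

lemma hasSum_exp_real (x : ℝ) : HasSum (fun n : ℕ => x ^ n / n.factorial) (Real.exp x) := by
  rw [Real.exp_eq_exp_ℝ]
  exact NormedSpace.expSeries_div_hasSum_exp x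

/-- Exponential generating function of the moments:
`Σ_n μ_n(c) w^n/n! = μ_0(c e^w)` whenever `|c| e^{|w|} < R`. -/
theorem moments_exponential_generating_function
    (a : ℕ → ℝ) (R : ℝ≥0∞)
    (hR : R = ⨆ (r : ℝ≥0) (_ : ∃ C : ℝ, ∀ x : ℕ, |a x| * (r : ℝ) ^ x ≤ C), (r : ℝ≥0∞))
    (hRpos : 0 < R)
    (mu : ℕ → ℝ → ℝ)
    (hmu : ∀ (n : ℕ) (c : ℝ), mu n c = ∑' x : ℕ, (x : ℝ) ^ n * a x * c ^ x) :
    ∀ c w : ℝ, ENNReal.ofReal (|c| * Real.exp |w|) < R →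
      HasSum (fun n : ℕ => mu n c * w ^ n / n.factorial) (mu 0 (c * Real.exp w)) := by
  intro c w hcw
  rw [hR, lt_iSup_iff] at hcw
  obtain ⟨r, hr⟩ := hcw
  rw [lt_iSup_iff] at hr
  obtain ⟨⟨C, hC⟩, hlt⟩ := hr
  set t : ℝ := |c| * Real.exp |w| with ht
  have ht0 : 0 ≤ t := by positivity
  have hrpos : (0 : ℝ) < r := by
    have : (0 : ℝ≥0∞) < (r : ℝ≥0∞) := lt_of_le_of_lt (zero_le) hlt
    exact_mod_cast this
  have htr : t < r := by
    rw [← ENNReal.ofReal_coe_nnreal, ENNReal.ofReal_lt_ofReal_iff hrpos] at hlt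
    exact hlt
  have hC0 : (0 : ℝ) ≤ C := le_trans (abs_nonneg (a 0)) (by simpa using hC 0)
  -- the double-indexed family
  set g : ℕ × ℕ → ℝ := fun p => ((p.1 : ℝ) ^ p.2 * a p.1 * c ^ p.1) * (w ^ p.2 / (p.2).factorial)
    with hg_def
  have habs : ∀ p : ℕ × ℕ, |g p| =
      (|a p.1| * |c| ^ p.1) * (((p.1 : ℝ) * |w|) ^ p.2 / (p.2).factorial) := by
    intro ⟨x, n⟩
    simp only [hg_def, abs_mul, abs_div, abs_pow, abs_abs, Nat.abs_cast, mul_pow]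
    ring
  -- summability of |g| fiberwise in n
  have hfib : ∀ x : ℕ, HasSum (fun n => |g (x, n)|)
      ((|a x| * |c| ^ x) * Real.exp ((x : ℝ) * |w|)) := by
    intro x
    simp only [habs]
    exact (hasSum_exp_real ((x : ℝ) * |w|)).mul_left _
  -- the outer sums are bounded by a geometric series
  have houter : Summable fun x : ℕ => (|a x| * |c| ^ x) * Real.exp ((x : ℝ) * |w|) := by
    have hq1 : t / r < 1 := (div_lt_one hrpos).2 htr
    have hq0 : (0 : ℝ) ≤ t / r := div_nonneg ht0 hrpos.le
    refine Summable.of_nonneg_of_le (fun x => by positivity) (fun x => ?_)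
      ((summable_geometric_of_lt_one hq0 hq1).mul_left C)
    · 
      have h1 : (|a x| * |c| ^ x) * Real.exp ((x : ℝ) * |w|) = |a x| * t ^ x := by
        rw [ht, mul_pow, Real.exp_nat_mul]
        ring
      have h2 : |a x| * t ^ x = (|a x| * (r : ℝ) ^ x) * (t / r) ^ x := by
        rw [div_pow]
        field_simp
      rw [h1, h2]
      exact mul_le_mul_of_nonneg_right (hC x) (by positivity)
  -- summability of g over the product
  have hgabs : Summable fun p : ℕ × ℕ => |g p| := by
    rw [summable_prod_of_nonneg (fun p => abs_nonneg _)]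
    refine ⟨fun x => (hfib x).summable, ?_⟩
    apply houter.congr
    intro x
    exact ((hfib x).tsum_eq).symm
  have hg : Summable g := summable_abs_iff.mp hgabs
  -- fiberwise sums in n : exponential
  have hfibg : ∀ x : ℕ, HasSum (fun n => g (x, n)) (a x * (c * Real.exp w) ^ x) := by
    intro x
    have : HasSum (fun n : ℕ => (a x * c ^ x) * (((x : ℝ) * w) ^ n / n.factorial))
        ((a x * c ^ x) * Real.exp ((x : ℝ) * w)) :=
      (hasSum_exp_real ((x : ℝ) * w)).mul_left _
    have heq : (fun n : ℕ => (a x * c ^ x) * (((x : ℝ) * w) ^ n / n.factorial)) =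
        fun n => g (x, n) := by
      funext n
      simp only [hg_def, mul_pow]
      ring
    rw [heq] at this
    convert this using 1
    rw [mul_pow, Real.exp_nat_mul]
    ring
  have hS : HasSum (fun x : ℕ => a x * (c * Real.exp w) ^ x) (∑' p, g p) :=
    hg.hasSum.prod_fiberwise hfibg
  -- fiberwise sums in x : the moments
  have hmuS : ∀ n : ℕ, Summable fun x : ℕ => (x : ℝ) ^ n * a x * c ^ x := by
    intro n
    have hq1 : |c| / r < 1 := by
      have : |c| ≤ t := by
        rw [ht]
        nlinarith [Real.one_le_exp (abs_nonneg w), abs_nonneg c]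
      exact (div_lt_one hrpos).2 (lt_of_le_of_lt this htr)
    have hq0 : (0 : ℝ) ≤ |c| / r := by positivity
    apply Summable.of_abs
    refine Summable.of_nonneg_of_le (fun x => abs_nonneg _) (fun x => ?_)
      (Summable.mul_left C (summable_pow_mul_geometric_of_norm_lt_one (R := ℝ) n
        (r := |c| / r) (by rwa [Real.norm_eq_abs, abs_of_nonneg hq0])))
    · 
      have h1 : |(x : ℝ) ^ n * a x * c ^ x| = (x : ℝ) ^ n * (|a x| * |c| ^ x) := by
        rw [abs_mul, abs_mul, abs_pow, abs_pow, Nat.abs_cast]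
        ring
      have h2 : |a x| * |c| ^ x = (|a x| * (r : ℝ) ^ x) * (|c| / r) ^ x := by
        rw [div_pow]
        field_simp
      rw [h1, h2]
      have := mul_le_mul_of_nonneg_right (hC x) (by positivity : (0:ℝ) ≤ (|c| / r) ^ x)
      nlinarith [pow_nonneg (Nat.cast_nonneg x : (0:ℝ) ≤ x) n]
  have hfibn : ∀ n : ℕ, HasSum (fun x => g (x, n)) (mu n c * w ^ n / n.factorial) := by
    intro n
    have := (hmuS n).hasSum.mul_right (w ^ n / n.factorial)
    rw [← hmu n c, ← mul_div_assoc] at this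
    exact this
  -- swap and conclude
  have hswap : HasSum (fun p : ℕ × ℕ => g (p.2, p.1)) (∑' p, g p) := by
    have := (Equiv.prodComm ℕ ℕ).hasSum_iff (f := g) (a := ∑' p, g p)
    exact this.2 hg.hasSum
  have hfinal : HasSum (fun n : ℕ => mu n c * w ^ n / n.factorial) (∑' p, g p) :=
    hswap.prod_fiberwise hfibn
  have : mu 0 (c * Real.exp w) = ∑' p, g p := by
    rw [hmu]
    simp only [pow_zero, one_mul]
    exact hS.tsum_eq
  rwa [this]
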